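/- Let H be a Hopf *-algebra, B a right H-module *-algebra, and M a right H-equivariant B-*-bimodule. The coboundary map D : U(Cent_B(B⊕M)) → ZS¹_ℓ(H;B,M), defined by Dυ(h) := (υ◁h)·υ*, is a group homomorphism whose image BS¹_ℓ(H;B,M) is contained in the centre of ZS¹_ℓ(H;B,M). -/

import Mathlib

open TensorProduct

section ConvolutionFramework

variable {k : Type*} [CommRing k] [StarRing k]
variable {H : Type*} [Ring H] [HopfAlgebra k H] [StarRing H] [StarModule k H]
variable {B : Type*} [Ring B] [Algebra k B] [StarRing B] [StarModule k B]
variable {M : Type*} [AddCommGroup M] [Module k M] [StarAddMonoid M] [StarModule k M]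

/-- The convolution product on `C(H,B) = Hom_k(H,B)`:
`(f ⋆ g)(h) = f(h₍₁₎) g(h₍₂₎)`. -/
noncomputable def conv (f g : H →ₗ[k] B) : H →ₗ[k] B :=
  LinearMap.mul' k B ∘ₗ TensorProduct.map f g ∘ₗ Coalgebra.comul

/-- The convolution unit `ε(·) 1_B`. -/
noncomputable def convOne : H →ₗ[k] B :=
  Algebra.linearMap k B ∘ₗ Coalgebra.counit

/-- The involution on the convolution bimodule: `f*(h) = (f (S(h)*))*`. -/
noncomputable def convStar (f : H →ₗ[k] M) : H →ₗ[k] M where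
  toFun h := star (f (star (HopfAlgebra.antipode (R := k) h)))
  map_add' x y := by simp
  map_smul' r x := by simp [star_smul]

/-- The `star ⊗ star` map on `H ⊗ H` (as an additive map). -/
noncomputable def starTensor : H ⊗[k] H →+ H ⊗[k] H :=
  TensorProduct.liftAddHom
    { toFun := fun x =>
        { toFun := fun y => star x ⊗ₜ[k] star y
          map_zero' := by simp
          map_add' := fun y₁ y₂ => by simp [star_add, TensorProduct.tmul_add] }
      map_zero' := by ext y; simp
      map_add' := fun x₁ x₂ => by ext y; simp [star_add, TensorProduct.add_tmul] }
    (fun r x y => by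
      simp only [AddMonoidHom.coe_mk, ZeroHom.coe_mk, star_smul]
      rw [TensorProduct.smul_tmul])

/-- `H` is a Hopf `*`-algebra: `Δ(h*) = h₍₁₎* ⊗ h₍₂₎*`, `ε(h*) = ε(h)*`, and
`S ∘ * ∘ S ∘ * = id`. -/
def IsHopfStar (k H : Type*) [CommRing k] [StarRing k]
    [Ring H] [HopfAlgebra k H] [StarRing H] [StarModule k H] : Prop :=
  (∀ h : H, Coalgebra.comul (R := k) (star h) = starTensor (Coalgebra.comul (R := k) h)) ∧
  (∀ h : H, Coalgebra.counit (R := k) (star h) = star (Coalgebra.counit (R := k) h)) ∧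
  (∀ h : H, HopfAlgebra.antipode (R := k) (star (HopfAlgebra.antipode (R := k) (star h))) = h)

end ConvolutionFramework

section ModuleAlgebra

/-- A right `H`-module `*`-algebra `B`: a right action `act` of `H` on `B` such that the
multiplication and unit of `B` are `H`-linear in the Hopf sense and the action is
compatible with the `*`-structures. -/
structure RightHopfModuleStarAlgebra (k H B : Type*) [CommRing k] [StarRing k]
    [Ring H] [HopfAlgebra k H] [StarRing H] [StarModule k H]
    [Ring B] [Algebra k B] [StarRing B] [StarModule k B] where
  act : B →ₗ[k] H →ₗ[k] B
  act_one : ∀ b : B, act b 1 = b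
  act_mul : ∀ (b : B) (h h' : H), act b (h * h') = act (act b h) h'
  act_algebra_mul : ∀ b₁ b₂ : B,
    act (b₁ * b₂) = LinearMap.mul' k B ∘ₗ TensorProduct.map (act b₁) (act b₂) ∘ₗ Coalgebra.comul
  act_algebra_one : act 1 = Algebra.linearMap k B ∘ₗ Coalgebra.counit
  act_star : ∀ (b : B) (h : H),
    star (act b h) = act (star b) (star (HopfAlgebra.antipode (R := k) h))

/-- A right `H`-equivariant `B`-`*`-bimodule `M`: commuting left and right `B`-actions,
a right `H`-action, the `*`-structure compatibilities, and Hopf-equivariance of the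
`B`-actions. -/
structure EquivStarBimodule (k H B M : Type*) [CommRing k] [StarRing k]
    [Ring H] [HopfAlgebra k H] [StarRing H] [StarModule k H]
    [Ring B] [Algebra k B] [StarRing B] [StarModule k B]
    [AddCommGroup M] [Module k M] [StarAddMonoid M] [StarModule k M]
    (ρ : RightHopfModuleStarAlgebra k H B) where
  lact : B →ₗ[k] M →ₗ[k] M
  ract : M →ₗ[k] B →ₗ[k] M
  hact : M →ₗ[k] H →ₗ[k] M
  lact_one : ∀ m : M, lact 1 m = m
  lact_mul : ∀ (b₁ b₂ : B) (m : M), lact (b₁ * b₂) m = lact b₁ (lact b₂ m)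
  ract_one : ∀ m : M, ract m 1 = m
  ract_mul : ∀ (m : M) (b₁ b₂ : B), ract m (b₁ * b₂) = ract (ract m b₁) b₂
  middle : ∀ (b₁ : B) (m : M) (b₂ : B), ract (lact b₁ m) b₂ = lact b₁ (ract m b₂)
  star_compat : ∀ (b₁ : B) (m : M) (b₂ : B),
    star (lact b₁ (ract m b₂)) = lact (star b₂) (ract (star m) (star b₁))
  hact_one : ∀ m : M, hact m 1 = m
  hact_mul : ∀ (m : M) (h h' : H), hact m (h * h') = hact (hact m h) h'
  hact_lact : ∀ (b : B) (m : M), hact (lact b m) =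
    TensorProduct.lift lact ∘ₗ TensorProduct.map (ρ.act b) (hact m) ∘ₗ Coalgebra.comul
  hact_ract : ∀ (m : M) (b : B), hact (ract m b) =
    TensorProduct.lift ract ∘ₗ TensorProduct.map (hact m) (ρ.act b) ∘ₗ Coalgebra.comul
  hact_star : ∀ (m : M) (h : H),
    star (hact m h) = hact (star m) (star (HopfAlgebra.antipode (R := k) h))

variable {k H B M : Type*} [CommRing k] [StarRing k]
  [Ring H] [HopfAlgebra k H] [StarRing H] [StarModule k H]
  [Ring B] [Algebra k B] [StarRing B] [StarModule k B]
  [AddCommGroup M] [Module k M] [StarAddMonoid M] [StarModule k M]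
  {ρ : RightHopfModuleStarAlgebra k H B}

/-- The left convolution action of `C(H,B)` on `C(H,M)`: `(f ⋆ μ)(h) = f(h₍₁₎) • μ(h₍₂₎)`. -/
noncomputable def convL (S : EquivStarBimodule k H B M ρ)
    (f : H →ₗ[k] B) (μ : H →ₗ[k] M) : H →ₗ[k] M :=
  TensorProduct.lift S.lact ∘ₗ TensorProduct.map f μ ∘ₗ Coalgebra.comul

/-- The right convolution action of `C(H,B)` on `C(H,M)`: `(μ ⋆ f)(h) = μ(h₍₁₎) • f(h₍₂₎)`. -/
noncomputable def convR (S : EquivStarBimodule k H B M ρ)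
    (μ : H →ₗ[k] M) (f : H →ₗ[k] B) : H →ₗ[k] M :=
  TensorProduct.lift S.ract ∘ₗ TensorProduct.map μ f ∘ₗ Coalgebra.comul

/-- A lazy Sweedler 1-cocycle: a unitary `σ` of `C(H,B)` centralizing
`ρ_B(B) ⊕ ρ_M(M)`, with `σ(1) = 1` and `σ(hk) = (σ(h) ◁ k₍₁₎) σ(k₍₂₎)`. -/
noncomputable def IsLazySweedlerCocycle (S : EquivStarBimodule k H B M ρ)
    (σ : H →ₗ[k] B) : Prop :=
  conv σ (convStar σ) = convOne ∧
  conv (convStar σ) σ = convOne ∧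
  (∀ b : B, conv σ (ρ.act b) = conv (ρ.act b) σ) ∧
  (∀ m : M, convL S σ (S.hact m) = convR S (S.hact m) σ) ∧
  σ 1 = 1 ∧
  (∀ h : H, σ ∘ₗ LinearMap.mulLeft k h =
    LinearMap.mul' k B ∘ₗ TensorProduct.map (ρ.act (σ h)) σ ∘ₗ Coalgebra.comul)

/-- A lazy Hochschild 1-cocycle: a self-adjoint `μ ∈ C(H,M)` centralizing `ρ_B(B)`,
with `μ(1) = 0` and `μ(hk) = μ(h) ◁ k + ε(h) μ(k)`. -/
noncomputable def IsLazyHochschildCocycle (S : EquivStarBimodule k H B M ρ)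
    (μ : H →ₗ[k] M) : Prop :=
  convStar μ = μ ∧
  (∀ b : B, convL S (ρ.act b) μ = convR S μ (ρ.act b)) ∧
  μ 1 = 0 ∧
  (∀ h : H, μ ∘ₗ LinearMap.mulLeft k h = S.hact (μ h) + Coalgebra.counit (R := k) h • μ)

/-- `υ` is a unitary of `Cent_B(B ⊕ M)`: a unitary of `B` commuting with all of `B` and
centralizing `M`. -/
def IsCentralUnitary (S : EquivStarBimodule k H B M ρ) (υ : B) : Prop :=
  υ * star υ = 1 ∧ star υ * υ = 1 ∧ (∀ b : B, υ * b = b * υ) ∧ ∀ m : M, S.lact υ m = S.ract m υ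

/-- The Sweedler coboundary `Dυ(h) := (υ ◁ h) υ*`. -/
noncomputable def sweedlerCobound (ρ : RightHopfModuleStarAlgebra k H B) (υ : B) :
    H →ₗ[k] B :=
  LinearMap.mulRight k (star υ) ∘ₗ ρ.act υ

/-- The Hochschild coboundary `Dm(h) := m ◁ h - ε(h) m`. -/
noncomputable def hochCobound (S : EquivStarBimodule k H B M ρ) (m : M) : H →ₗ[k] M :=
  S.hact m - LinearMap.smulRight (Coalgebra.counit (R := k)) m

/-- An `H`-equivariant `*`-derivation `der : B → M`. -/
def IsEquivStarDerivation (S : EquivStarBimodule k H B M ρ) (der : B →ₗ[k] M) : Prop :=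
  (∀ b₁ b₂ : B, der (b₁ * b₂) = S.ract (der b₁) b₂ + S.lact b₁ (der b₂)) ∧
  (∀ b : B, der (star b) = - star (der b)) ∧
  (∀ (b : B) (h : H), der (ρ.act b h) = S.hact (der b) h)

/-- The Maurer–Cartan cocycle `MC[der](σ)(h) := -derσ(h₍₁₎) • σ*(h₍₂₎)`. -/
noncomputable def mcCocycle (S : EquivStarBimodule k H B M ρ) (der : B →ₗ[k] M)
    (σ : H →ₗ[k] B) : H →ₗ[k] M :=
  - (TensorProduct.lift S.ract ∘ₗ TensorProduct.map (der ∘ₗ σ) (convStar σ) ∘ₗ Coalgebra.comul)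

end ModuleAlgebra


section Stmt10Aux

variable {k H B M : Type*} [CommRing k] [StarRing k]
  [Ring H] [HopfAlgebra k H] [StarRing H] [StarModule k H]
  [Ring B] [Algebra k B] [StarRing B] [StarModule k B]
  [AddCommGroup M] [Module k M] [StarAddMonoid M] [StarModule k M]
  {ρ : RightHopfModuleStarAlgebra k H B}

lemma conv_mulRight (f g : H →ₗ[k] B) (c : B) :
    conv f (LinearMap.mulRight k c ∘ₗ g) = LinearMap.mulRight k c ∘ₗ conv f g := by
  unfold conv
  have h1 : LinearMap.mul' k B ∘ₗ TensorProduct.map f (LinearMap.mulRight k c ∘ₗ g)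
      = (LinearMap.mulRight k c ∘ₗ LinearMap.mul' k B) ∘ₗ TensorProduct.map f g := by
    ext x y; simp [mul_assoc]
  rw [← LinearMap.comp_assoc, h1]
  rfl

lemma mulRight_conv (f g : H →ₗ[k] B) (c : B) (hc : ∀ x : B, x * c = c * x) :
    conv (LinearMap.mulRight k c ∘ₗ f) g = LinearMap.mulRight k c ∘ₗ conv f g := by
  unfold conv
  have h1 : LinearMap.mul' k B ∘ₗ TensorProduct.map (LinearMap.mulRight k c ∘ₗ f) g
      = (LinearMap.mulRight k c ∘ₗ LinearMap.mul' k B) ∘ₗ TensorProduct.map f g := by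
    ext x y
    simp only [AlgebraTensorModule.curry_apply, curry_apply, LinearMap.coe_restrictScalars,
      LinearMap.comp_apply, map_tmul, LinearMap.mulRight_apply, LinearMap.mul'_apply]
    rw [mul_assoc, ← hc (g y), ← mul_assoc]
  rw [← LinearMap.comp_assoc, h1]
  rfl

lemma conv_assoc (f g p : H →ₗ[k] B) : conv (conv f g) p = conv f (conv g p) := by
  have e1 : TensorProduct.map (conv f g) p
      = (LinearMap.mul' k B).rTensor B ∘ₗ TensorProduct.map (TensorProduct.map f g) p
          ∘ₗ (Coalgebra.comul (R := k) (A := H)).rTensor H := by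
    ext x y; simp [conv]
  have e2 : TensorProduct.map f (conv g p)
      = (LinearMap.mul' k B).lTensor B ∘ₗ TensorProduct.map f (TensorProduct.map g p)
          ∘ₗ (Coalgebra.comul (R := k) (A := H)).lTensor H := by
    ext x y; simp [conv]
  have key : LinearMap.mul' k B ∘ₗ (LinearMap.mul' k B).rTensor B
        ∘ₗ TensorProduct.map (TensorProduct.map f g) p
      = (LinearMap.mul' k B ∘ₗ (LinearMap.mul' k B).lTensor B
          ∘ₗ TensorProduct.map f (TensorProduct.map g p))
        ∘ₗ (TensorProduct.assoc k H H H).toLinearMap := by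
    ext x y z; simp [mul_assoc]
  show LinearMap.mul' k B ∘ₗ TensorProduct.map (conv f g) p ∘ₗ Coalgebra.comul
      = LinearMap.mul' k B ∘ₗ TensorProduct.map f (conv g p) ∘ₗ Coalgebra.comul
  rw [e1, e2]
  apply LinearMap.ext; intro h
  simp only [LinearMap.comp_apply]
  rw [← Coalgebra.coassoc_apply]
  have := LinearMap.congr_fun key ((Coalgebra.comul (R := k) (A := H)).rTensor H (Coalgebra.comul h))
  simpa only [LinearMap.comp_apply, LinearEquiv.coe_coe] using this

lemma convL_mulRight (S : EquivStarBimodule k H B M ρ) (f : H →ₗ[k] B) (μ : H →ₗ[k] M)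
    (c : B) (hc : ∀ m : M, S.lact c m = S.ract m c) :
    convL S (LinearMap.mulRight k c ∘ₗ f) μ = S.ract.flip c ∘ₗ convL S f μ := by
  unfold convL
  have h1 : TensorProduct.lift S.lact ∘ₗ TensorProduct.map (LinearMap.mulRight k c ∘ₗ f) μ
      = (S.ract.flip c ∘ₗ TensorProduct.lift S.lact) ∘ₗ TensorProduct.map f μ := by
    ext x y
    simp only [AlgebraTensorModule.curry_apply, curry_apply, LinearMap.coe_restrictScalars,
      LinearMap.comp_apply, map_tmul, lift.tmul, LinearMap.mulRight_apply, LinearMap.flip_apply]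
    rw [S.lact_mul, hc, S.middle]
  rw [← LinearMap.comp_assoc, h1]
  rfl

lemma convR_mulRight (S : EquivStarBimodule k H B M ρ) (μ : H →ₗ[k] M) (f : H →ₗ[k] B)
    (c : B) :
    convR S μ (LinearMap.mulRight k c ∘ₗ f) = S.ract.flip c ∘ₗ convR S μ f := by
  unfold convR
  have h1 : TensorProduct.lift S.ract ∘ₗ TensorProduct.map μ (LinearMap.mulRight k c ∘ₗ f)
      = (S.ract.flip c ∘ₗ TensorProduct.lift S.ract) ∘ₗ TensorProduct.map μ f := by
    ext x y
    simp only [AlgebraTensorModule.curry_apply, curry_apply, LinearMap.coe_restrictScalars,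
      LinearMap.comp_apply, map_tmul, lift.tmul, LinearMap.mulRight_apply, LinearMap.flip_apply]
    rw [S.ract_mul]
  rw [← LinearMap.comp_assoc, h1]
  rfl

end Stmt10Aux

/-- Let `H` be a Hopf `*`-algebra, `B` a right `H`-module `*`-algebra, and
`M` a right `H`-equivariant `B`-`*`-bimodule.  The coboundary map
`D : U(Cent_B(B ⊕ M)) → ZS¹_ℓ(H;B,M)`, `Dυ(h) := (υ ◁ h) υ*`, is a group homomorphism
whose image is contained in the centre of the group of lazy Sweedler 1-cocycles. -/
theorem stmt10 {H B M : Type*}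
    [Ring H] [HopfAlgebra ℂ H] [StarRing H] [StarModule ℂ H]
    [Ring B] [Algebra ℂ B] [StarRing B] [StarModule ℂ B]
    [AddCommGroup M] [Module ℂ M] [StarAddMonoid M] [StarModule ℂ M]
    (hH : IsHopfStar ℂ H)
    (ρ : RightHopfModuleStarAlgebra ℂ H B)
    (S : EquivStarBimodule ℂ H B M ρ) :
    (∀ υ : B, IsCentralUnitary S υ → IsLazySweedlerCocycle S (sweedlerCobound ρ υ)) ∧
    (∀ υ₁ υ₂ : B, IsCentralUnitary S υ₁ → IsCentralUnitary S υ₂ →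
      sweedlerCobound ρ (υ₁ * υ₂) = conv (sweedlerCobound ρ υ₁) (sweedlerCobound ρ υ₂)) ∧
    (∀ (υ : B) (σ : H →ₗ[ℂ] B), IsCentralUnitary S υ → IsLazySweedlerCocycle S σ →
      conv σ (sweedlerCobound ρ υ) = conv (sweedlerCobound ρ υ) σ) := by
  have hS' : ∀ h : H, star (HopfAlgebra.antipode (R := ℂ)
      (star (HopfAlgebra.antipode (R := ℂ) h))) = h := by
    intro h
    have h0 := hH.2.2 (star h)
    rw [star_star] at h0
    simpa using congrArg star h0
  have actmul : ∀ b₁ b₂ : B, ρ.act (b₁ * b₂) = conv (ρ.act b₁) (ρ.act b₂) := ρ.act_algebra_mul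
  have Done : sweedlerCobound ρ (1 : B) = convOne := by
    unfold sweedlerCobound convOne
    rw [star_one, LinearMap.mulRight_one, LinearMap.id_comp, ρ.act_algebra_one]
  have hcsu : ∀ υ : B, (∀ b : B, υ * b = b * υ) → ∀ x : B, x * star υ = star υ * x := by
    intro υ hu x
    simpa using congrArg star (hu (star x))
  have hDstar : ∀ υ : B, IsCentralUnitary S υ →
      convStar (sweedlerCobound ρ υ) = sweedlerCobound ρ (star υ) := by
    intro υ hu
    apply LinearMap.ext; intro h
    show star (sweedlerCobound ρ υ (star (HopfAlgebra.antipode (R := ℂ) h))) = _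
    rw [show sweedlerCobound ρ υ (star (HopfAlgebra.antipode (R := ℂ) h))
        = ρ.act υ (star (HopfAlgebra.antipode (R := ℂ) h)) * star υ from rfl]
    rw [star_mul, star_star, ρ.act_star, hS' h]
    rw [show sweedlerCobound ρ (star υ) h = ρ.act (star υ) h * star (star υ) from rfl, star_star]
    exact hu.2.2.1 _
  have key2 : ∀ υ₁ υ₂ : B, (∀ x : B, x * star υ₁ = star υ₁ * x) →
      sweedlerCobound ρ (υ₁ * υ₂) = conv (sweedlerCobound ρ υ₁) (sweedlerCobound ρ υ₂) := by
    intro υ₁ υ₂ hcs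
    simp only [sweedlerCobound]
    rw [conv_mulRight, mulRight_conv _ _ _ hcs, ← actmul]
    apply LinearMap.ext; intro h
    simp only [LinearMap.comp_apply, LinearMap.mulRight_apply, star_mul]
    rw [hcs (star υ₂), ← mul_assoc]
  refine ⟨?_, ?_, ?_⟩
  · intro υ hu
    have hcs : ∀ x : B, x * star υ = star υ * x := hcsu υ hu.2.2.1
    have hcss : ∀ x : B, x * star (star υ) = star (star υ) * x := by
      intro x; rw [star_star]; exact (hu.2.2.1 x).symm
    have hlr : ∀ m' : M, S.lact (star υ) m' = S.ract m' (star υ) := by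
      intro m'
      have a1 : ∀ m'' : M, star (S.lact υ m'') = S.ract (star m'') (star υ) := by
        intro m''
        have := S.star_compat υ m'' 1
        simpa [S.ract_one, S.lact_one] using this
      have a2 : ∀ m'' : M, star (S.ract m'' υ) = S.lact (star υ) (star m'') := by
        intro m''
        have := S.star_compat 1 m'' υ
        simpa [S.ract_one, S.lact_one] using this
      have h5 := a2 (star m')
      rw [← hu.2.2.2 (star m'), a1 (star m')] at h5
      simpa using h5.symm
    refine ⟨?_, ?_, ?_, ?_, ?_, ?_⟩
    · rw [hDstar υ hu, ← key2 υ (star υ) hcs, hu.1, Done]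
    · rw [hDstar υ hu, ← key2 (star υ) υ hcss, hu.2.1, Done]
    · intro b
      simp only [sweedlerCobound]
      rw [mulRight_conv _ _ _ hcs, conv_mulRight, ← actmul, ← actmul, hu.2.2.1 b]
    · intro m
      simp only [sweedlerCobound]
      rw [convL_mulRight S _ _ _ hlr, convR_mulRight]
      congr 1
      have e1 : convL S (ρ.act υ) (S.hact m) = S.hact (S.lact υ m) := (S.hact_lact υ m).symm
      have e2 : convR S (S.hact m) (ρ.act υ) = S.hact (S.ract m υ) := (S.hact_ract m υ).symm
      rw [e1, e2, hu.2.2.2 m]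
    · show ρ.act υ 1 * star υ = 1
      rw [ρ.act_one, hu.1]
    · intro h
      show sweedlerCobound ρ υ ∘ₗ LinearMap.mulLeft ℂ h
          = conv (ρ.act (sweedlerCobound ρ υ h)) (sweedlerCobound ρ υ)
      have hal : ρ.act υ ∘ₗ LinearMap.mulLeft ℂ h = ρ.act (ρ.act υ h) := by
        apply LinearMap.ext; intro x
        simp only [LinearMap.comp_apply, LinearMap.mulLeft_apply]
        exact ρ.act_mul υ h x
      rw [show sweedlerCobound ρ υ h = ρ.act υ h * star υ from rfl,
        actmul (ρ.act υ h) (star υ), conv_assoc]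
      simp only [sweedlerCobound]
      rw [conv_mulRight, conv_mulRight, ← actmul, hu.2.1, ← actmul, mul_one,
        LinearMap.comp_assoc, hal]
  · intro υ₁ υ₂ hu₁ _
    exact key2 υ₁ υ₂ (hcsu υ₁ hu₁.2.2.1)
  · intro υ σ hu hσ
    simp only [sweedlerCobound]
    rw [conv_mulRight, mulRight_conv _ _ _ (hcsu υ hu.2.2.1), hσ.2.2.1 υ]
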